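/- Define x₀ : ℝ² → ℝ⁶ by x₀(u,v) = (1/√2)·(cos u, sin u·sin(√2 v), −sin u·cos(√2 v), sin u, cos u·sin(√2 v), −cos u·cos(√2 v)), and let J be the standard complex structure of ℝ⁶ ≅ ℂ³ given by J(x¹,x²,x³,x⁴,x⁵,x⁶) = (−x⁴,−x⁵,−x⁶,x¹,x²,x³). Then for all (u,v) ∈ ℝ²: (i) ‖x₀(u,v)‖ = 1, so x₀ maps into the unit sphere S⁵ ⊂ ℝ⁶; (ii) ⟨∂x₀/∂u, ∂x₀/∂u⟩ = 1, ⟨∂x₀/∂v, ∂x₀/∂v⟩ = 1 and ⟨∂x₀/∂u, ∂x₀/∂v⟩ = 0, so x₀ is a Riemannian immersion of the flat plane (the induced metric is du² + dv²); (iii) ⟨∂x₀/∂u, J x₀⟩ = 0 and ⟨∂x₀/∂v, J x₀⟩ = 0, so x₀ is a Legendre immersion with respect to the standard contact form η_p(X) = ⟨X, Jp⟩ of S⁵. -/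
import Mathlib


open Real
open scoped RealInnerProductSpace

private lemma v6_0 (a b c d e f : ℝ) : ![a,b,c,d,e,f] (0:Fin 6) = a := rfl
private lemma v6_1 (a b c d e f : ℝ) : ![a,b,c,d,e,f] (1:Fin 6) = b := rfl
private lemma v6_2 (a b c d e f : ℝ) : ![a,b,c,d,e,f] (2:Fin 6) = c := rfl
private lemma v6_3 (a b c d e f : ℝ) : ![a,b,c,d,e,f] (3:Fin 6) = d := rfl
private lemma v6_4 (a b c d e f : ℝ) : ![a,b,c,d,e,f] (4:Fin 6) = e := rfl
private lemma v6_5 (a b c d e f : ℝ) : ![a,b,c,d,e,f] (5:Fin 6) = f := rfl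
private lemma eapp6 (x : Fin 6 → ℝ) (i : Fin 6) :
    ((WithLp.equiv 2 (Fin 6 → ℝ)).symm x) i = x i := rfl

private lemma hasDerivAt_euclidean6 {f : ℝ → Fin 6 → ℝ} {f' : Fin 6 → ℝ} {t : ℝ}
    (h : ∀ i, HasDerivAt (fun s => f s i) (f' i) t) :
    HasDerivAt (fun s => (WithLp.equiv 2 (Fin 6 → ℝ)).symm (f s))
      ((WithLp.equiv 2 (Fin 6 → ℝ)).symm f') t := by
  have hp : HasDerivAt f f' t := hasDerivAt_pi.mpr h
  exact ((PiLp.continuousLinearEquiv 2 ℝ (fun _ : Fin 6 => ℝ)).symm.toContinuousLinearMap.hasFDerivAt.comp_hasDerivAt t hp)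

/-- Sasahara's explicit proper biharmonic Legendre immersion of a flat plane
into `S⁵ ⊂ ℝ⁶ ≅ ℂ³`: the map `x₀` takes values in the unit sphere, is a
Riemannian immersion of the flat plane (induced metric `du² + dv²`), and is
Legendre with respect to the standard contact form `η_p(X) = ⟨X, Jp⟩`. -/
theorem sasahara_immersion_spherical_isometric_legendre
    (x₀ : ℝ → ℝ → EuclideanSpace ℝ (Fin 6))
    (hx₀ : ∀ u v, x₀ u v = (WithLp.equiv 2 (Fin 6 → ℝ)).symm
      ![(1 / Real.sqrt 2) * Real.cos u,
        (1 / Real.sqrt 2) * (Real.sin u * Real.sin (Real.sqrt 2 * v)),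
        (1 / Real.sqrt 2) * (-(Real.sin u * Real.cos (Real.sqrt 2 * v))),
        (1 / Real.sqrt 2) * Real.sin u,
        (1 / Real.sqrt 2) * (Real.cos u * Real.sin (Real.sqrt 2 * v)),
        (1 / Real.sqrt 2) * (-(Real.cos u * Real.cos (Real.sqrt 2 * v)))])
    (J : EuclideanSpace ℝ (Fin 6) → EuclideanSpace ℝ (Fin 6))
    (hJ : ∀ x : EuclideanSpace ℝ (Fin 6), J x = (WithLp.equiv 2 (Fin 6 → ℝ)).symm
      ![-(x 3), -(x 4), -(x 5), x 0, x 1, x 2]) :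
    ∀ u v : ℝ,
      ‖x₀ u v‖ = 1 ∧
      ⟪deriv (fun s => x₀ s v) u, deriv (fun s => x₀ s v) u⟫ = 1 ∧
      ⟪deriv (fun s => x₀ u s) v, deriv (fun s => x₀ u s) v⟫ = 1 ∧
      ⟪deriv (fun s => x₀ s v) u, deriv (fun s => x₀ u s) v⟫ = 0 ∧
      ⟪deriv (fun s => x₀ s v) u, J (x₀ u v)⟫ = 0 ∧
      ⟪deriv (fun s => x₀ u s) v, J (x₀ u v)⟫ = 0 := by
  intro u v
  set a : ℝ := 1 / Real.sqrt 2 with ha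
  have ha2 : a ^ 2 = 1 / 2 := by
    rw [ha, div_pow, one_pow, Real.sq_sqrt (by norm_num : (2:ℝ) ≥ 0)]
  have hsq : Real.sin u ^ 2 + Real.cos u ^ 2 = 1 := Real.sin_sq_add_cos_sq u
  have hsqv : Real.sin (Real.sqrt 2 * v) ^ 2 + Real.cos (Real.sqrt 2 * v) ^ 2 = 1 :=
    Real.sin_sq_add_cos_sq (Real.sqrt 2 * v)
  -- derivative in u
  have hdu : HasDerivAt (fun s => x₀ s v)
      ((WithLp.equiv 2 (Fin 6 → ℝ)).symm
        ![a * -Real.sin u,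
          a * (Real.cos u * Real.sin (Real.sqrt 2 * v)),
          a * -(Real.cos u * Real.cos (Real.sqrt 2 * v)),
          a * Real.cos u,
          a * -(Real.sin u * Real.sin (Real.sqrt 2 * v)),
          a * (Real.sin u * Real.cos (Real.sqrt 2 * v))]) u := by
    have : HasDerivAt (fun s => (WithLp.equiv 2 (Fin 6 → ℝ)).symm
        (![a * Real.cos s,
          a * (Real.sin s * Real.sin (Real.sqrt 2 * v)),
          a * (-(Real.sin s * Real.cos (Real.sqrt 2 * v))),
          a * Real.sin s,
          a * (Real.cos s * Real.sin (Real.sqrt 2 * v)),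
          a * (-(Real.cos s * Real.cos (Real.sqrt 2 * v)))]))
        ((WithLp.equiv 2 (Fin 6 → ℝ)).symm
        ![a * -Real.sin u,
          a * (Real.cos u * Real.sin (Real.sqrt 2 * v)),
          a * -(Real.cos u * Real.cos (Real.sqrt 2 * v)),
          a * Real.cos u,
          a * -(Real.sin u * Real.sin (Real.sqrt 2 * v)),
          a * (Real.sin u * Real.cos (Real.sqrt 2 * v))]) u := by
      apply hasDerivAt_euclidean6
      intro i
      fin_cases i <;> simp only [Matrix.cons_val_zero, Matrix.cons_val_one, Matrix.head_cons,
        Matrix.cons_val_two, Matrix.tail_cons, Matrix.cons_val_three, Matrix.cons_val_four,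
        Fin.mk_zero, Fin.mk_one]
      · exact (Real.hasDerivAt_cos u).const_mul a
      · exact ((Real.hasDerivAt_sin u).mul_const _).const_mul a
      · simpa using (((Real.hasDerivAt_sin u).mul_const (Real.cos (Real.sqrt 2 * v))).neg).const_mul a
      · exact (Real.hasDerivAt_sin u).const_mul a
      · simpa using ((Real.hasDerivAt_cos u).mul_const (Real.sin (Real.sqrt 2 * v))).const_mul a
      · simpa [neg_mul, mul_neg] using
          (((Real.hasDerivAt_cos u).mul_const (Real.cos (Real.sqrt 2 * v))).neg).const_mul a
    convert this using 2 with s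
    rw [hx₀]
  -- derivative in v
  have hlin : HasDerivAt (fun s : ℝ => Real.sqrt 2 * s) (Real.sqrt 2) v := by
    simpa using (hasDerivAt_id v).const_mul (Real.sqrt 2)
  have hsin2 : HasDerivAt (fun s : ℝ => Real.sin (Real.sqrt 2 * s))
      (Real.cos (Real.sqrt 2 * v) * Real.sqrt 2) v :=
    (Real.hasDerivAt_sin (Real.sqrt 2 * v)).comp v hlin
  have hcos2 : HasDerivAt (fun s : ℝ => Real.cos (Real.sqrt 2 * s))
      (-Real.sin (Real.sqrt 2 * v) * Real.sqrt 2) v :=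
    (Real.hasDerivAt_cos (Real.sqrt 2 * v)).comp v hlin
  have hdv : HasDerivAt (fun s => x₀ u s)
      ((WithLp.equiv 2 (Fin 6 → ℝ)).symm
        ![0,
          a * (Real.sin u * (Real.cos (Real.sqrt 2 * v) * Real.sqrt 2)),
          a * -(Real.sin u * (-Real.sin (Real.sqrt 2 * v) * Real.sqrt 2)),
          0,
          a * (Real.cos u * (Real.cos (Real.sqrt 2 * v) * Real.sqrt 2)),
          a * -(Real.cos u * (-Real.sin (Real.sqrt 2 * v) * Real.sqrt 2))]) v := by
    have : HasDerivAt (fun s => (WithLp.equiv 2 (Fin 6 → ℝ)).symm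
        (![a * Real.cos u,
          a * (Real.sin u * Real.sin (Real.sqrt 2 * s)),
          a * (-(Real.sin u * Real.cos (Real.sqrt 2 * s))),
          a * Real.sin u,
          a * (Real.cos u * Real.sin (Real.sqrt 2 * s)),
          a * (-(Real.cos u * Real.cos (Real.sqrt 2 * s)))]))
        ((WithLp.equiv 2 (Fin 6 → ℝ)).symm
        ![0,
          a * (Real.sin u * (Real.cos (Real.sqrt 2 * v) * Real.sqrt 2)),
          a * -(Real.sin u * (-Real.sin (Real.sqrt 2 * v) * Real.sqrt 2)),
          0,
          a * (Real.cos u * (Real.cos (Real.sqrt 2 * v) * Real.sqrt 2)),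
          a * -(Real.cos u * (-Real.sin (Real.sqrt 2 * v) * Real.sqrt 2))]) v := by
      apply hasDerivAt_euclidean6
      intro i
      fin_cases i <;> simp only [Matrix.cons_val_zero, Matrix.cons_val_one, Matrix.head_cons,
        Matrix.cons_val_two, Matrix.tail_cons, Matrix.cons_val_three, Matrix.cons_val_four,
        Fin.mk_zero, Fin.mk_one]
      · exact hasDerivAt_const v _
      · exact ((hsin2.const_mul (Real.sin u))).const_mul a
      · simpa using ((hcos2.const_mul (Real.sin u)).neg).const_mul a
      · exact hasDerivAt_const v _
      · exact ((hsin2.const_mul (Real.cos u))).const_mul a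
      · simpa using ((hcos2.const_mul (Real.cos u)).neg).const_mul a
    convert this using 2 with s
    rw [hx₀]
  have hdu' := hdu.deriv
  have hdv' := hdv.deriv
  have hs2 : Real.sqrt 2 * Real.sqrt 2 = 2 := Real.mul_self_sqrt (by norm_num)
  have P := Real.sin_sq_add_cos_sq u
  have Q := Real.sin_sq_add_cos_sq (Real.sqrt 2 * v)
  refine ⟨?_, ?_, ?_, ?_, ?_, ?_⟩
  · rw [hx₀, EuclideanSpace.norm_eq]
    simp only [eapp6, v6_0, v6_1, v6_2, v6_3, v6_4, v6_5, Fin.sum_univ_six,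
      Real.norm_eq_abs, sq_abs]
    rw [show ∀ r : ℝ, Real.sqrt r = 1 ↔ r = 1 from ?_]
    · linear_combination (Real.sin (Real.sqrt 2*v)^2 + Real.cos (Real.sqrt 2*v)^2) *
        (Real.sin u^2 + Real.cos u^2) * ha2 + (1/2) *
        (Real.sin (Real.sqrt 2*v)^2 + Real.cos (Real.sqrt 2*v)^2) * P + (1/2) * Q +
        (Real.sin u^2 + Real.cos u^2) * ha2 + (1/2) * P
    · intro r
      constructor
      · intro h; nlinarith [Real.sq_sqrt (show (0:ℝ) ≤ r from by
          by_contra hc; push_neg at hc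
          rw [Real.sqrt_eq_zero_of_nonpos hc.le] at h; norm_num at h)]
      · rintro rfl; exact Real.sqrt_one
  · rw [hdu', PiLp.inner_apply]
    simp only [eapp6, v6_0, v6_1, v6_2, v6_3, v6_4, v6_5, Fin.sum_univ_six,
      RCLike.inner_apply, conj_trivial]
    linear_combination ((Real.sin u^2 + Real.cos u^2) * (1 + (Real.sin (Real.sqrt 2*v)^2 + Real.cos (Real.sqrt 2*v)^2))) * ha2 + ((1/2) * (1 + (Real.sin (Real.sqrt 2*v)^2 + Real.cos (Real.sqrt 2*v)^2))) * P + (1/2) * Q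
  · rw [hdv', PiLp.inner_apply]
    simp only [eapp6, v6_0, v6_1, v6_2, v6_3, v6_4, v6_5, Fin.sum_univ_six,
      RCLike.inner_apply, conj_trivial]
    linear_combination (Real.sqrt 2 * Real.sqrt 2 * (Real.sin u^2 + Real.cos u^2) *
        (Real.sin (Real.sqrt 2*v)^2 + Real.cos (Real.sqrt 2*v)^2)) * ha2 +
      ((1/2) * (Real.sin u^2 + Real.cos u^2) *
        (Real.sin (Real.sqrt 2*v)^2 + Real.cos (Real.sqrt 2*v)^2)) * hs2 +
      (Real.sin (Real.sqrt 2*v)^2 + Real.cos (Real.sqrt 2*v)^2) * P + Q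
  · rw [hdu', hdv', PiLp.inner_apply]
    simp only [eapp6, v6_0, v6_1, v6_2, v6_3, v6_4, v6_5, Fin.sum_univ_six,
      RCLike.inner_apply, conj_trivial]
    ring
  · rw [hdu', hJ, hx₀, PiLp.inner_apply]
    simp only [eapp6, v6_0, v6_1, v6_2, v6_3, v6_4, v6_5, Fin.sum_univ_six,
      RCLike.inner_apply, conj_trivial]
    linear_combination ((Real.sin u^2 + Real.cos u^2) * (1 - (Real.sin (Real.sqrt 2*v)^2 + Real.cos (Real.sqrt 2*v)^2))) * ha2 + ((1/2) * (1 - (Real.sin (Real.sqrt 2*v)^2 + Real.cos (Real.sqrt 2*v)^2))) * P - (1/2) * Q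
  · rw [hdv', hJ, hx₀, PiLp.inner_apply]
    simp only [eapp6, v6_0, v6_1, v6_2, v6_3, v6_4, v6_5, Fin.sum_univ_six,
      RCLike.inner_apply, conj_trivial]
    ring
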